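/- The 1-dimensional Hausdorff measure of the set of isosceles classes in the triangle of triangles is μH¹({x ∈ T₊ : x₀ = x₁ or x₁ = x₂ or x₀ = x₂}) = (3√6/2)π. -/

import Mathlib

open Real MeasureTheory
open scoped ENNReal

/-- The triangle of triangles, inside Euclidean `ℝ³`. -/
def Tplus : Set (EuclideanSpace ℝ (Fin 3)) :=
  {x | x 0 + x 1 + x 2 = π ∧
    0 ≤ x 0 ∧ x 0 ≤ π ∧ 0 ≤ x 1 ∧ x 1 ≤ π ∧ 0 ≤ x 2 ∧ x 2 ≤ π}

lemma seg_meas (a b : EuclideanSpace ℝ (Fin 3)) : MeasurableSet (segment ℝ a b) := by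
  rw [segment_eq_image]
  exact ((isCompact_Icc.image (by continuity)).isClosed).measurableSet

lemma seg01 : ({x ∈ Tplus | x 0 = x 1} : Set (EuclideanSpace ℝ (Fin 3))) =
    segment ℝ !₂[0, 0, π] !₂[π/2, π/2, 0] := by
  ext x
  simp only [Set.mem_setOf_eq, Tplus, segment_eq_image, Set.mem_image, Set.mem_Icc]
  constructor
  · rintro ⟨⟨hsum, h0, h0', h1, h1', h2, h2'⟩, heq⟩
    have pp := pi_pos
    refine ⟨2 * x 0 / π, ⟨by positivity, by rw [div_le_one pp]; linarith⟩, ?_⟩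
    ext i
    fin_cases i <;>
      simp [PiLp.add_apply, PiLp.smul_apply, smul_eq_mul] <;>
      field_simp <;> nlinarith [pi_pos]
  · rintro ⟨t, ⟨ht0, ht1⟩, rfl⟩
    have pp := pi_pos
    simp [PiLp.add_apply, PiLp.smul_apply, smul_eq_mul]
    repeat' apply And.intro
    all_goals try ring
    all_goals nlinarith

lemma seg12 : ({x ∈ Tplus | x 1 = x 2} : Set (EuclideanSpace ℝ (Fin 3))) =
    segment ℝ !₂[π, 0, 0] !₂[0, π/2, π/2] := by
  ext x
  simp only [Set.mem_setOf_eq, Tplus, segment_eq_image, Set.mem_image, Set.mem_Icc]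
  constructor
  · rintro ⟨⟨hsum, h0, h0', h1, h1', h2, h2'⟩, heq⟩
    have pp := pi_pos
    refine ⟨2 * x 1 / π, ⟨by positivity, by rw [div_le_one pp]; linarith⟩, ?_⟩
    ext i
    fin_cases i <;>
      simp [PiLp.add_apply, PiLp.smul_apply, smul_eq_mul] <;>
      field_simp <;> nlinarith [pi_pos]
  · rintro ⟨t, ⟨ht0, ht1⟩, rfl⟩
    have pp := pi_pos
    simp [PiLp.add_apply, PiLp.smul_apply, smul_eq_mul]
    repeat' apply And.intro
    all_goals try ring
    all_goals nlinarith

lemma seg02 : ({x ∈ Tplus | x 0 = x 2} : Set (EuclideanSpace ℝ (Fin 3))) =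
    segment ℝ !₂[0, π, 0] !₂[π/2, 0, π/2] := by
  ext x
  simp only [Set.mem_setOf_eq, Tplus, segment_eq_image, Set.mem_image, Set.mem_Icc]
  constructor
  · rintro ⟨⟨hsum, h0, h0', h1, h1', h2, h2'⟩, heq⟩
    have pp := pi_pos
    refine ⟨2 * x 0 / π, ⟨by positivity, by rw [div_le_one pp]; linarith⟩, ?_⟩
    ext i
    fin_cases i <;>
      simp [PiLp.add_apply, PiLp.smul_apply, smul_eq_mul] <;>
      field_simp <;> nlinarith [pi_pos]
  · rintro ⟨t, ⟨ht0, ht1⟩, rfl⟩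
    have pp := pi_pos
    simp [PiLp.add_apply, PiLp.smul_apply, smul_eq_mul]
    repeat' apply And.intro
    all_goals try ring
    all_goals nlinarith

lemma edist_calc (a b : EuclideanSpace ℝ (Fin 3))
    (h : (a 0 - b 0) ^ 2 + (a 1 - b 1) ^ 2 + (a 2 - b 2) ^ 2 = 3 / 2 * π ^ 2) :
    edist a b = ENNReal.ofReal (Real.sqrt 6 / 2 * π) := by
  rw [edist_dist, EuclideanSpace.dist_eq]
  congr 1
  rw [Fin.sum_univ_three]
  simp only [Real.dist_eq, sq_abs]
  rw [show (a 0 - b 0) ^ 2 + (a 1 - b 1) ^ 2 + (a 2 - b 2) ^ 2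
      = (Real.sqrt 6 / 2 * π) ^ 2 from by
    rw [h]
    have h6 : Real.sqrt 6 ^ 2 = 6 := Real.sq_sqrt (by norm_num)
    nlinarith [h6]]
  exact Real.sqrt_sq (by positivity)

theorem measure_of_isosceles :
    μH[1] {x ∈ Tplus | x 0 = x 1 ∨ x 1 = x 2 ∨ x 0 = x 2} =
      ENNReal.ofReal (3 * Real.sqrt 6 / 2 * π) := by
  haveI : NullSingletonClass (μH[1] : Measure (EuclideanSpace ℝ (Fin 3))) :=
    MeasureTheory.Measure.noAtoms_hausdorff (EuclideanSpace ℝ (Fin 3)) one_pos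
  set S01 := segment ℝ (!₂[0, 0, π] : EuclideanSpace ℝ (Fin 3)) !₂[π/2, π/2, 0] with hS01
  set S12 := segment ℝ (!₂[π, 0, 0] : EuclideanSpace ℝ (Fin 3)) !₂[0, π/2, π/2] with hS12
  set S02 := segment ℝ (!₂[0, π, 0] : EuclideanSpace ℝ (Fin 3)) !₂[π/2, 0, π/2] with hS02
  set c : EuclideanSpace ℝ (Fin 3) := !₂[π/3, π/3, π/3] with hc
  have hset : {x ∈ Tplus | x 0 = x 1 ∨ x 1 = x 2 ∨ x 0 = x 2} = S01 ∪ S12 ∪ S02 := by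
    rw [hS01, ← seg01, hS12, ← seg12, hS02, ← seg02]
    ext x
    simp only [Set.mem_setOf_eq, Set.mem_union]
    tauto
  -- pairwise intersections are contained in {c}
  have h0112 : S01 ∩ S12 ⊆ {c} := by
    rw [hS01, ← seg01, hS12, ← seg12]
    rintro x ⟨⟨hT, h01⟩, _, h12⟩
    obtain ⟨hsum, -⟩ := hT
    have e0 : x 0 = π / 3 := by linarith
    have e1 : x 1 = π / 3 := by linarith
    have e2 : x 2 = π / 3 := by linarith
    simp only [Set.mem_singleton_iff, hc]
    ext i
    fin_cases i <;> simpa using (by assumption)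
  have h0102 : S01 ∩ S02 ⊆ {c} := by
    rw [hS01, ← seg01, hS02, ← seg02]
    rintro x ⟨⟨hT, h01⟩, _, h02⟩
    obtain ⟨hsum, -⟩ := hT
    have e0 : x 0 = π / 3 := by linarith
    have e1 : x 1 = π / 3 := by linarith
    have e2 : x 2 = π / 3 := by linarith
    simp only [Set.mem_singleton_iff, hc]
    ext i
    fin_cases i <;> simpa using (by assumption)
  have h1202 : S12 ∩ S02 ⊆ {c} := by
    rw [hS12, ← seg12, hS02, ← seg02]
    rintro x ⟨⟨hT, h12⟩, _, h02⟩
    obtain ⟨hsum, -⟩ := hT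
    have e0 : x 0 = π / 3 := by linarith
    have e1 : x 1 = π / 3 := by linarith
    have e2 : x 2 = π / 3 := by linarith
    simp only [Set.mem_singleton_iff, hc]
    ext i
    fin_cases i <;> simpa using (by assumption)
  have hcnull : (μH[1] : Measure (EuclideanSpace ℝ (Fin 3))) {c} = 0 := measure_singleton c
  rw [hset]
  have hd1 : AEDisjoint (μH[1] : Measure (EuclideanSpace ℝ (Fin 3))) (S01 ∪ S12) S02 := by
    refine measure_mono_null ?_ hcnull
    rw [Set.union_inter_distrib_right]
    exact Set.union_subset h0102 h1202
  have hd2 : AEDisjoint (μH[1] : Measure (EuclideanSpace ℝ (Fin 3))) S01 S12 :=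
    measure_mono_null h0112 hcnull
  rw [measure_union₀ (seg_meas _ _).nullMeasurableSet hd1,
    measure_union₀ (seg_meas _ _).nullMeasurableSet hd2]
  rw [hausdorffMeasure_segment, hausdorffMeasure_segment, hausdorffMeasure_segment]
  have pp := pi_pos
  rw [edist_calc _ _ (by norm_num [Matrix.cons_val_zero, Matrix.cons_val_one, Matrix.cons_val_two, Matrix.tail_cons, Matrix.head_cons]; ring),
    edist_calc _ _ (by norm_num [Matrix.cons_val_zero, Matrix.cons_val_one, Matrix.cons_val_two, Matrix.tail_cons, Matrix.head_cons]; ring),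
    edist_calc _ _ (by norm_num [Matrix.cons_val_zero, Matrix.cons_val_one, Matrix.cons_val_two, Matrix.tail_cons, Matrix.head_cons]; ring)]
  rw [← ENNReal.ofReal_add (by positivity) (by positivity),
    ← ENNReal.ofReal_add (by positivity) (by positivity)]
  congr 1
  ring
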